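/- Let d ∈ (0,1], s ∈ [1/2,1) and N > 2. Then: (a) there is a unique a* ∈ [1,N) satisfying a* + d·(a*)^s = N, and N/2 < a* < N, so λ₀ := (2a* − N)/N ∈ (0,1); (b) for every λ with 1/N ≤ λ < 1, the sets Z₁ = {a ≥ 1 : |a − N| ≤ d·a^s} and Z_λ = {a ≥ 1 : |a − λN| ≤ d·a^s} are disjoint if and only if λ < λ₀. -/

import Mathlib

/-- single-scale resolution of the synchrosqueezed wave packet transform with
geometric scaling parameter `s`: (a) there is a unique `a* ∈ [1,N)` with `a* + d(a*)^s = N`,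
and `N/2 < a* < N`; (b) with `λ₀ = (2a* − N)/N ∈ (0,1)`, for every `λ ∈ [1/N, 1)` the sets
`Z₁` and `Z_λ` are disjoint iff `λ < λ₀`. -/
theorem sswpt_single_scale_resolution
    (d s N : ℝ) (hd : 0 < d) (hd1 : d ≤ 1) (hs : 1 / 2 ≤ s) (hs1 : s < 1) (hN : 2 < N) :
    ∃ astar : ℝ,
      (astar ∈ Set.Ico (1 : ℝ) N ∧ astar + d * astar ^ s = N ∧
        ∀ a' ∈ Set.Ico (1 : ℝ) N, a' + d * a' ^ s = N → a' = astar) ∧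
      (N / 2 < astar ∧ astar < N) ∧
      ((2 * astar - N) / N ∈ Set.Ioo (0 : ℝ) 1) ∧
      (∀ l : ℝ, 1 / N ≤ l → l < 1 →
        (Disjoint {a : ℝ | 1 ≤ a ∧ |a - N| ≤ d * a ^ s}
            {a : ℝ | 1 ≤ a ∧ |a - l * N| ≤ d * a ^ s}
          ↔ l < (2 * astar - N) / N)) := by
  have hs0 : (0:ℝ) < s := by linarith
  have hN0 : (0:ℝ) < N := by linarith
  -- f = a + d a^s strictly increasing on Ici 1
  have hfmono : StrictMonoOn (fun a : ℝ => a + d * a ^ s) (Set.Ici 1) := by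
    intro a ha b hb hab
    have h0a : (0:ℝ) ≤ a := le_trans zero_le_one ha
    have hpow : a ^ s ≤ b ^ s := Real.rpow_le_rpow h0a hab.le hs0.le
    simp only
    nlinarith
  -- g = a - d a^s strictly increasing on Ici 1
  have hgmono : StrictMonoOn (fun a : ℝ => a - d * a ^ s) (Set.Ici 1) := by
    apply strictMonoOn_of_deriv_pos (convex_Ici 1)
    · apply ContinuousOn.sub continuousOn_id
      exact continuousOn_const.mul (continuousOn_id.rpow_const
        (fun x hx => Or.inl (by have : (1:ℝ) ≤ x := hx; positivity)))
    · intro x hx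
      rw [interior_Ici] at hx
      have hx1 : (1:ℝ) < x := hx
      have hx0 : x ≠ 0 := by positivity
      have hder : HasDerivAt (fun a : ℝ => a - d * a ^ s)
          (1 - d * (s * x ^ (s - 1))) x :=
        (hasDerivAt_id x).sub ((Real.hasDerivAt_rpow_const (Or.inl hx0)).const_mul d)
      rw [hder.deriv]
      have hle : x ^ (s - 1) ≤ 1 :=
        Real.rpow_le_one_of_one_le_of_nonpos hx1.le (by linarith)
      have hpos : (0:ℝ) < x ^ (s - 1) := Real.rpow_pos_of_pos (by linarith) _
      have h1 : s * x ^ (s - 1) ≤ s * 1 := mul_le_mul_of_nonneg_left hle hs0.le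
      have h2 : d * (s * x ^ (s - 1)) ≤ 1 * (s * 1) :=
        mul_le_mul hd1 h1 (by positivity) zero_le_one
      have h3 : (1:ℝ) * (s * 1) = s := by ring
      linarith
  -- IVT to get astar
  have hcont : ContinuousOn (fun a : ℝ => a + d * a ^ s) (Set.Icc 1 N) := by
    apply ContinuousOn.add continuousOn_id
    exact continuousOn_const.mul (continuousOn_id.rpow_const
      (fun x hx => Or.inl (by have : (1:ℝ) ≤ x := hx.1; positivity)))
  have h1N : (1:ℝ) ≤ N := by linarith
  have hf1 : (fun a : ℝ => a + d * a ^ s) 1 ≤ N := by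
    simp [Real.one_rpow]; linarith
  have hfN : N ≤ (fun a : ℝ => a + d * a ^ s) N := by
    have : (0:ℝ) < N ^ s := Real.rpow_pos_of_pos hN0 _
    simp only
    nlinarith
  obtain ⟨astar, ⟨ha1, haN⟩, hfa⟩ :=
    intermediate_value_Icc h1N hcont ⟨hf1, hfN⟩
  simp only at hfa
  have hapos : (0:ℝ) < astar := by linarith
  have hpowpos : (0:ℝ) < astar ^ s := Real.rpow_pos_of_pos hapos _
  have haltN : astar < N := by nlinarith
  have haIci : astar ∈ Set.Ici (1:ℝ) := ha1
  -- astar > N/2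
  have hhalf : N / 2 < astar := by
    by_contra h
    push_neg at h
    have hN2 : (1:ℝ) < N / 2 := by linarith
    have h1 : astar ^ s ≤ (N / 2) ^ s := Real.rpow_le_rpow hapos.le h (le_of_lt hs0)
    have h2 : (N / 2) ^ s < (N / 2) ^ (1:ℝ) :=
      Real.rpow_lt_rpow_of_exponent_lt hN2 hs1
    rw [Real.rpow_one] at h2
    nlinarith
  have hl0N : (2 * astar - N) / N * N = 2 * astar - N := by
    field_simp
  refine ⟨astar, ⟨⟨ha1, haltN⟩, hfa, ?_⟩, ⟨hhalf, haltN⟩, ?_, ?_⟩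
  · intro a' ⟨ha'1, _⟩ hfa'
    exact hfmono.injOn ha'1 haIci
      (show a' + d * a' ^ s = astar + d * astar ^ s by rw [hfa', hfa])
  · constructor
    · exact div_pos (by linarith) hN0
    · rw [div_lt_one hN0]; linarith
  · intro l hl1 hl2
    have hlN1 : (1:ℝ) ≤ l * N := by
      have h := mul_le_mul_of_nonneg_right hl1 hN0.le
      rwa [div_mul_cancel₀ _ hN0.ne'] at h
    constructor
    · intro hdisj
      by_contra h
      push_neg at h
      have hmem1 : astar ∈ {a : ℝ | 1 ≤ a ∧ |a - N| ≤ d * a ^ s} := by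
        refine ⟨ha1, ?_⟩
        rw [abs_sub_comm, abs_of_nonneg (by linarith)]
        linarith
      have hmem2 : astar ∈ {a : ℝ | 1 ≤ a ∧ |a - l * N| ≤ d * a ^ s} := by
        refine ⟨ha1, abs_le.mpr ⟨?_, ?_⟩⟩
        · have h2 : l * N < 1 * N := mul_lt_mul_of_pos_right hl2 hN0
          have h3 : (1:ℝ) * N = N := one_mul N
          linarith
        · have h2 : (2 * astar - N) / N * N ≤ l * N :=
            mul_le_mul_of_nonneg_right h hN0.le
          rw [hl0N] at h2
          linarith
      exact Set.not_disjoint_iff.mpr ⟨astar, hmem1, hmem2⟩ hdisj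
    · intro hllt
      rw [Set.disjoint_left]
      rintro a ⟨ha1a, habs1⟩ ⟨_, habs2⟩
      have haIa : a ∈ Set.Ici (1:ℝ) := ha1a
      -- a ≥ astar from habs1
      have hge : astar ≤ a := by
        by_contra h
        push_neg at h
        have := hfmono haIa haIci h
        simp only at this
        rw [hfa] at this
        have h1 : N - a ≤ |a - N| := by
          rw [abs_sub_comm]; exact le_abs_self _
        linarith
      -- a < astar from habs2
      have hlt : a < astar := by
        have h2 : a - l * N ≤ |a - l * N| := le_abs_self _
        have hgl : a - d * a ^ s ≤ l * N := by linarith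
        have hlN : l * N < 2 * astar - N := by
          have := mul_lt_mul_of_pos_right hllt hN0
          rwa [hl0N] at this
        by_contra h
        push_neg at h
        have := hgmono.monotoneOn haIci haIa h
        have this : astar - d * astar ^ s ≤ a - d * a ^ s := this
        nlinarith
      linarith
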